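/- Let u : ℝ × ℝⁿ → ℝ be a smooth solution of the PDE ∂u/∂t = Δu + P(u) with admissible decay, and suppose u is periodic in time: there is T₀ > 0 with u(t + T₀, x) = u(t, x) for all (t, x). Then u is constant in t, i.e. ∂u/∂t ≡ 0; equivalently, there are no nonconstant time-periodic solutions of the PDE with admissible decay. -/

import Mathlib

open MeasureTheory Filter Topology
open scoped ENNReal

noncomputable section

/-- Euclidean space `ℝⁿ`. -/
abbrev Spc (n : ℕ) := EuclideanSpace ℝ (Fin n)

/-- The Laplacian in the spatial variables. -/
noncomputable def lap {n : ℕ} (f : Spc n → ℝ) (x : Spc n) : ℝ :=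
  ∑ i : Fin n, fderiv ℝ (fun y => fderiv ℝ f y (EuclideanSpace.single i 1)) x
    (EuclideanSpace.single i 1)

/-- The polynomial nonlinearity `P(f)(x) = -f(x)^N + ∑_{i<N} aᵢ(x) f(x)^i`. -/
noncomputable def Pfun {n N : ℕ} (a : Fin N → Spc n → ℝ) (f : Spc n → ℝ) (x : Spc n) : ℝ :=
  -(f x) ^ N + ∑ i : Fin N, a i x * f x ^ (i : ℕ)

/-- The time derivative `∂u/∂t`. -/
noncomputable def timeDeriv {n : ℕ} (u : ℝ × Spc n → ℝ) (t : ℝ) (x : Spc n) : ℝ :=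
  deriv (fun s => u (s, x)) t

/-- `u` is a global solution of `∂u/∂t = Δu + P(u)`. -/
def IsSol {n N : ℕ} (a : Fin N → Spc n → ℝ) (u : ℝ × Spc n → ℝ) : Prop :=
  ∀ t x, timeDeriv u t x = lap (fun y => u (t, y)) x + Pfun a (fun y => u (t, y)) x

/-- `w` is an equilibrium: `Δw + P(w) = 0`. -/
def IsEquilibrium {n N : ℕ} (a : Fin N → Spc n → ℝ) (w : Spc n → ℝ) : Prop :=
  ∀ x, lap w x + Pfun a w x = 0

/-- The energy density `|∂u/∂t|² + |Δu + P(u)|²`. -/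
noncomputable def energyDensity {n N : ℕ} (a : Fin N → Spc n → ℝ) (u : ℝ × Spc n → ℝ)
    (t : ℝ) (x : Spc n) : ℝ :=
  (timeDeriv u t x) ^ 2 + (lap (fun y => u (t, y)) x + Pfun a (fun y => u (t, y)) x) ^ 2

/-- The energy `E(u) = (1/2) ∫_ℝ ∫_{ℝⁿ} (|∂u/∂t|² + |Δu + P(u)|²) dx dt`, valued in `ℝ≥0∞`. -/
noncomputable def energy {n N : ℕ} (a : Fin N → Spc n → ℝ) (u : ℝ × Spc n → ℝ) : ℝ≥0∞ :=
  (1 / 2) * ∫⁻ t : ℝ, ∫⁻ x : Spc n, ENNReal.ofReal (energyDensity a u t x)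

/-- The action density `(1/2)|∇f|² + f^{N+1}/(N+1) - ∑_{i<N} aᵢ f^{i+1}/(i+1)`. -/
noncomputable def actionDensity {n N : ℕ} (a : Fin N → Spc n → ℝ) (f : Spc n → ℝ)
    (x : Spc n) : ℝ :=
  (1 / 2) * ‖gradient f x‖ ^ 2 + f x ^ (N + 1) / (N + 1)
    - ∑ i : Fin N, a i x * f x ^ ((i : ℕ) + 1) / ((i : ℕ) + 1)

/-- The action functional `A(f)`. -/
noncomputable def action {n N : ℕ} (a : Fin N → Spc n → ℝ) (f : Spc n → ℝ) : ℝ :=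
  ∫ x : Spc n, actionDensity a f x

/-- `f` has finite action. -/
def FiniteAction {n N : ℕ} (a : Fin N → Spc n → ℝ) (f : Spc n → ℝ) : Prop :=
  Integrable (actionDensity a f)

/-- The coefficients `aᵢ` are smooth, in `L¹ ∩ L∞`, with all derivatives of all orders
bounded. -/
def GoodCoeffs {n N : ℕ} (a : Fin N → Spc n → ℝ) : Prop :=
  ∀ i, ContDiff ℝ (⊤ : ℕ∞) (a i) ∧ Integrable (a i) ∧
    ∀ k : ℕ, ∃ C : ℝ, ∀ x, ‖iteratedFDeriv ℝ k (a i) x‖ ≤ C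

/-- `u`, `∂u/∂t` and the spatial derivatives of `u` up to order two are bounded by a
constant multiple of `(1+|x|)^{-(n+1)}`, uniformly for `t` in compact intervals. -/
def AdmissibleDecay {n : ℕ} (u : ℝ × Spc n → ℝ) : Prop :=
  ∀ T > (0 : ℝ), ∃ C : ℝ, ∀ t : ℝ, ∀ x : Spc n, |t| ≤ T →
    |u (t, x)| ≤ C * (1 + ‖x‖) ^ (-(n + 1 : ℝ)) ∧
    |timeDeriv u t x| ≤ C * (1 + ‖x‖) ^ (-(n + 1 : ℝ)) ∧
    ‖fderiv ℝ (fun y => u (t, y)) x‖ ≤ C * (1 + ‖x‖) ^ (-(n + 1 : ℝ)) ∧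
    ‖iteratedFDeriv ℝ 2 (fun y => u (t, y)) x‖ ≤ C * (1 + ‖x‖) ^ (-(n + 1 : ℝ))

namespace NP

variable {n N : ℕ} {u : ℝ × Spc n → ℝ}

lemma hasFDerivAt_ins (t : ℝ) (x : Spc n) :
    HasFDerivAt (fun y : Spc n => (t, y)) (ContinuousLinearMap.inr ℝ ℝ (Spc n)) x := by
  have h := ((ContinuousLinearMap.inr ℝ ℝ (Spc n)).hasFDerivAt (x := x)).const_add ((t, 0) : ℝ × Spc n)
  exact h.congr_of_eventuallyEq (Filter.Eventually.of_forall fun y => by simp)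

lemma hasDerivAt_tcurve (t : ℝ) (x : Spc n) :
    HasDerivAt (fun s : ℝ => ((s, x) : ℝ × Spc n)) (1, 0) t :=
  HasDerivAt.prodMk (hasDerivAt_id t) (hasDerivAt_const t x)

lemma hasDerivAt_scurve (t : ℝ) (x v : Spc n) (s : ℝ) :
    HasDerivAt (fun s : ℝ => ((t, x + s • v) : ℝ × Spc n)) (0, v) s := by
  have h : HasDerivAt (fun s : ℝ => x + s • v) v s := by
    simpa using ((hasDerivAt_id s).smul_const v).const_add x
  exact HasDerivAt.prodMk (hasDerivAt_const s t) h

section calc1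
variable (hu : ContDiff ℝ (⊤ : ℕ∞) u)
include hu

lemma diffu : Differentiable ℝ u := hu.differentiable (by simp)

lemma diffD1 : Differentiable ℝ (fderiv ℝ u) :=
  (hu.fderiv_right (m := ((⊤:ℕ∞) : WithTop ℕ∞)) (by exact_mod_cast le_rfl)).differentiable
    (by simp)

lemma hasDerivAt_time (t : ℝ) (x : Spc n) :
    HasDerivAt (fun s => u (s, x)) (fderiv ℝ u (t, x) (1, 0)) t :=
  ((diffu hu (t, x)).hasFDerivAt).comp_hasDerivAt t (hasDerivAt_tcurve t x)

lemma timeDeriv_eq (t : ℝ) (x : Spc n) :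
    timeDeriv u t x = fderiv ℝ u (t, x) (1, 0) :=
  (hasDerivAt_time hu t x).deriv

lemma fderiv_slice (t : ℝ) (x : Spc n) :
    fderiv ℝ (fun y => u (t, y)) x
      = (fderiv ℝ u (t, x)).comp (ContinuousLinearMap.inr ℝ ℝ (Spc n)) :=
  ((diffu hu (t, x)).hasFDerivAt.comp x (hasFDerivAt_ins t x)).fderiv

lemma pd_eq (t : ℝ) (x v : Spc n) :
    fderiv ℝ (fun y => u (t, y)) x v = fderiv ℝ u (t, x) (0, v) := by
  rw [fderiv_slice hu]; rfl

lemma hasFDerivAt_D1slice (t : ℝ) (x : Spc n) (w : ℝ × Spc n) :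
    HasFDerivAt (fun y : Spc n => fderiv ℝ u (t, y) w)
      (((ContinuousLinearMap.apply ℝ ℝ w).comp (fderiv ℝ (fderiv ℝ u) (t, x))).comp
        (ContinuousLinearMap.inr ℝ ℝ (Spc n))) x := by
  have h1 : HasFDerivAt (fderiv ℝ u) (fderiv ℝ (fderiv ℝ u) (t, x)) (t, x) :=
    (diffD1 hu (t, x)).hasFDerivAt
  exact ((ContinuousLinearMap.apply ℝ ℝ w).hasFDerivAt.comp (t, x) h1).comp x (hasFDerivAt_ins t x)

lemma lap_eq (t : ℝ) (x : Spc n) :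
    lap (fun y => u (t, y)) x
      = ∑ i : Fin n, fderiv ℝ (fderiv ℝ u) (t, x) (0, EuclideanSpace.single i 1)
          ((0 : ℝ), EuclideanSpace.single i 1) := by
  unfold lap
  refine Finset.sum_congr rfl fun i _ => ?_
  have he : (fun y : Spc n => fderiv ℝ (fun z => u (t, z)) y (EuclideanSpace.single i 1))
      = fun y => fderiv ℝ u (t, y) ((0 : ℝ), EuclideanSpace.single i 1) :=
    funext fun y => pd_eq hu t y _
  rw [he, (hasFDerivAt_D1slice hu t x _).fderiv]
  rfl

lemma hasDerivAt_D1time (t : ℝ) (x : Spc n) (w : ℝ × Spc n) :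
    HasDerivAt (fun s : ℝ => fderiv ℝ u (s, x) w)
      (fderiv ℝ (fderiv ℝ u) (t, x) (1, 0) w) t := by
  have h1 : HasDerivAt (fun s : ℝ => fderiv ℝ u (s, x))
      (fderiv ℝ (fderiv ℝ u) (t, x) (1, 0)) t :=
    (diffD1 hu (t, x)).hasFDerivAt.comp_hasDerivAt t (hasDerivAt_tcurve t x)
  exact h1.clm_apply (hasDerivAt_const t w) |>.congr_deriv (by simp)

lemma hasDerivAt_uline (t : ℝ) (x v : Spc n) (s : ℝ) :
    HasDerivAt (fun s : ℝ => u (t, x + s • v)) (fderiv ℝ u (t, x + s • v) (0, v)) s :=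
  (diffu hu (t, x + s • v)).hasFDerivAt.comp_hasDerivAt s (hasDerivAt_scurve t x v s)

lemma hasDerivAt_D1line (t : ℝ) (x v : Spc n) (s : ℝ) (w : ℝ × Spc n) :
    HasDerivAt (fun s : ℝ => fderiv ℝ u (t, x + s • v) w)
      (fderiv ℝ (fderiv ℝ u) (t, x + s • v) (0, v) w) s := by
  have h1 : HasDerivAt (fun s : ℝ => fderiv ℝ u (t, x + s • v))
      (fderiv ℝ (fderiv ℝ u) (t, x + s • v) (0, v)) s :=
    (diffD1 hu (t, x + s • v)).hasFDerivAt.comp_hasDerivAt s (hasDerivAt_scurve t x v s)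
  exact h1.clm_apply (hasDerivAt_const s w) |>.congr_deriv (by simp)

lemma D2_symm (p : ℝ × Spc n) (v w : ℝ × Spc n) :
    fderiv ℝ (fderiv ℝ u) p v w = fderiv ℝ (fderiv ℝ u) p w v :=
  second_derivative_symmetric (fun y => (diffu hu y).hasFDerivAt)
    ((diffD1 hu p).hasFDerivAt) v w

lemma cont_D1 : Continuous (fderiv ℝ u) :=
  hu.continuous_fderiv (by simp)

lemma cont_D2 : Continuous (fderiv ℝ (fderiv ℝ u)) :=
  (hu.fderiv_right (m := ((⊤:ℕ∞) : WithTop ℕ∞))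
    (by exact_mod_cast le_rfl)).continuous_fderiv (by simp)

lemma cont_D1v (w : ℝ × Spc n) : Continuous (fun p : ℝ × Spc n => fderiv ℝ u p w) :=
  (cont_D1 hu).clm_apply continuous_const

lemma cont_D2vw (v w : ℝ × Spc n) :
    Continuous (fun p : ℝ × Spc n => fderiv ℝ (fderiv ℝ u) p v w) :=
  ((cont_D2 hu).clm_apply continuous_const).clm_apply continuous_const

lemma cont_slice (t : ℝ) : ContDiff ℝ (⊤ : ℕ∞) (fun y : Spc n => u (t, y)) :=
  hu.comp (contDiff_const.prodMk contDiff_id)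

lemma D2_slice (t : ℝ) (x v : Spc n) :
    fderiv ℝ (fderiv ℝ u) (t, x) ((0 : ℝ), v) ((0 : ℝ), v)
      = iteratedFDeriv ℝ 2 (fun y : Spc n => u (t, y)) x ![v, v] := by
  have hsl := cont_slice hu (n := n) t
  have hdsl : Differentiable ℝ (fderiv ℝ (fun y : Spc n => u (t, y))) :=
    (hsl.fderiv_right (m := ((⊤:ℕ∞) : WithTop ℕ∞)) (by exact_mod_cast le_rfl)).differentiable
      (by simp)
  have h1 : (fun y : Spc n => fderiv ℝ (fun z => u (t, z)) y v)
      = fun y => fderiv ℝ u (t, y) ((0 : ℝ), v) := funext fun y => pd_eq hu t y v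
  have h2 : fderiv ℝ (fun y : Spc n => fderiv ℝ (fun z => u (t, z)) y v) x v
      = fderiv ℝ (fderiv ℝ u) (t, x) ((0 : ℝ), v) ((0 : ℝ), v) := by
    rw [h1, (hasFDerivAt_D1slice hu t x _).fderiv]; rfl
  have h3 : fderiv ℝ (fun y : Spc n => fderiv ℝ (fun z => u (t, z)) y v) x v
      = fderiv ℝ (fderiv ℝ (fun z : Spc n => u (t, z))) x v v := by
    have h4 : HasFDerivAt (fun y : Spc n => fderiv ℝ (fun z => u (t, z)) y v)
        ((ContinuousLinearMap.apply ℝ ℝ v).comp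
          (fderiv ℝ (fderiv ℝ (fun z : Spc n => u (t, z))) x)) x :=
      (ContinuousLinearMap.apply ℝ ℝ v).hasFDerivAt.comp x (hdsl x).hasFDerivAt
    rw [h4.fderiv]; rfl
  rw [iteratedFDeriv_two_apply]
  simp only [Matrix.cons_val_zero, Matrix.cons_val_one, Matrix.head_cons]
  rw [← h3, h2]

end calc1

noncomputable def Qf (a : Fin N → Spc n → ℝ) (x : Spc n) (v : ℝ) : ℝ :=
  -v ^ N + ∑ i : Fin N, a i x * v ^ (i : ℕ)

noncomputable def Gf (a : Fin N → Spc n → ℝ) (x : Spc n) (v : ℝ) : ℝ :=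
  -(v ^ (N + 1)) / (N + 1) + ∑ i : Fin N, a i x * v ^ ((i : ℕ) + 1) / ((i : ℕ) + 1)

lemma hasDerivAt_Gf (a : Fin N → Spc n → ℝ) (x : Spc n) (v : ℝ) :
    HasDerivAt (Gf a x) (Qf a x v) v := by
  have hpow : ∀ k : ℕ, HasDerivAt (fun w : ℝ => w ^ (k + 1) / (k + 1)) (v ^ k) v := by
    intro k
    have h := (hasDerivAt_pow (k + 1) v).div_const ((k : ℝ) + 1)
    have hk : ((k : ℝ) + 1) ≠ 0 := by positivity
    have he : (↑(k + 1) * v ^ (k + 1 - 1)) / ((k : ℝ) + 1) = v ^ k := by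
      push_cast
      field_simp
    rwa [he] at h
  have h1 : HasDerivAt (fun w : ℝ => -(w ^ (N + 1)) / (N + 1)) (-v ^ N) v := by
    have h := ((hpow N).fun_neg)
    have he : (fun w : ℝ => -(w ^ (N + 1) / (N + 1))) = fun w : ℝ => -(w ^ (N + 1)) / (N + 1) := by
      funext w; ring
    rwa [he] at h
  have h2 : ∀ i : Fin N, HasDerivAt (fun w : ℝ => a i x * w ^ ((i : ℕ) + 1) / ((i : ℕ) + 1))
      (a i x * v ^ (i : ℕ)) v := by
    intro i
    have h := ((hpow (i : ℕ)).const_mul (a i x))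
    have he : (fun w : ℝ => a i x * (w ^ ((i:ℕ) + 1) / ((i:ℕ) + 1)))
        = fun w : ℝ => a i x * w ^ ((i:ℕ) + 1) / ((i:ℕ) + 1) := by
      funext w; ring
    rwa [he] at h
  exact h1.add (HasDerivAt.fun_sum fun i _ => h2 i)

lemma cont_Qf_comp (a : Fin N → Spc n → ℝ) (x : Spc n) {g : ℝ → ℝ} (hg : Continuous g) :
    Continuous (fun t => Qf a x (g t)) := by
  unfold Qf
  exact ((hg.pow N).neg).add
    (continuous_finset_sum _ fun i _ => continuous_const.mul (hg.pow _))

section per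
variable (hu : ContDiff ℝ (⊤ : ℕ∞) u) {T₀ : ℝ}
  (hper : ∀ (t : ℝ) (x : Spc n), u (t + T₀, x) = u (t, x))
include hu hper

lemma D1_per (t : ℝ) (x : Spc n) : fderiv ℝ u (t + T₀, x) = fderiv ℝ u (t, x) := by
  have hfun : (fun p : ℝ × Spc n => u (p + (T₀, 0))) = u := by
    funext p
    show u (p.1 + T₀, p.2 + 0) = u (p.1, p.2)
    rw [add_zero]
    exact hper p.1 p.2
  have htr : ∀ p : ℝ × Spc n, fderiv ℝ (fun q => u (q + (T₀, 0))) p = fderiv ℝ u (p + (T₀, 0)) :=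
    fun p => ((diffu hu (p + (T₀, 0))).hasFDerivAt.comp p
      ((hasFDerivAt_id p).add_const (T₀, 0))).fderiv
  have h := htr (t, x)
  rw [hfun] at h
  have he : ((t, x) : ℝ × Spc n) + (T₀, 0) = (t + T₀, x) := by
    simp [Prod.ext_iff]
  rw [he] at h
  exact h.symm

lemma ut_per (t : ℝ) (x : Spc n) : timeDeriv u (t + T₀) x = timeDeriv u t x := by
  show deriv (fun s => u (s, x)) (t + T₀) = deriv (fun s => u (s, x)) t
  rw [(hasDerivAt_time hu (t + T₀) x).deriv, (hasDerivAt_time hu t x).deriv, D1_per hu hper]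

lemma integral_Qut_zero (a : Fin N → Spc n → ℝ) (x : Spc n) :
    ∫ t in (0:ℝ)..T₀, Qf a x (u (t, x)) * fderiv ℝ u (t, x) (1, 0) = 0 := by
  have hd : ∀ t ∈ Set.uIcc (0:ℝ) T₀,
      HasDerivAt (fun s => Gf a x (u (s, x)))
        (Qf a x (u (t, x)) * fderiv ℝ u (t, x) (1, 0)) t := by
    intro t _
    exact (hasDerivAt_Gf a x (u (t, x))).comp t (hasDerivAt_time hu t x)
  have hcont : Continuous fun t => Qf a x (u (t, x)) * fderiv ℝ u (t, x) (1, 0) := by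
    have h1 : Continuous fun t : ℝ => ((t, x) : ℝ × Spc n) :=
      continuous_id.prodMk continuous_const
    exact (cont_Qf_comp a x ((diffu hu).continuous.comp h1)).mul ((cont_D1v hu _).comp h1)
  rw [intervalIntegral.integral_eq_sub_of_hasDerivAt hd (hcont.intervalIntegrable _ _)]
  have h : u (T₀, x) = u (0, x) := by simpa using hper 0 x
  rw [h, sub_self]

lemma integral_mix_zero (x : Spc n) (w : ℝ × Spc n) :
    ∫ t in (0:ℝ)..T₀,
      fderiv ℝ (fderiv ℝ u) (t, x) (1, 0) w * fderiv ℝ u (t, x) w = 0 := by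
  have hd : ∀ t ∈ Set.uIcc (0:ℝ) T₀,
      HasDerivAt (fun s => (fderiv ℝ u (s, x) w) ^ 2 / 2)
        (fderiv ℝ (fderiv ℝ u) (t, x) (1, 0) w * fderiv ℝ u (t, x) w) t := by
    intro t _
    have h := ((hasDerivAt_D1time hu t x w).fun_pow 2).div_const 2
    exact h.congr_deriv (by push_cast; ring)
  have h1 : Continuous fun t : ℝ => ((t, x) : ℝ × Spc n) :=
    continuous_id.prodMk continuous_const
  have hcont : Continuous fun t =>
      fderiv ℝ (fderiv ℝ u) (t, x) (1, 0) w * fderiv ℝ u (t, x) w :=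
    ((cont_D2vw hu _ _).comp h1).mul ((cont_D1v hu _).comp h1)
  rw [intervalIntegral.integral_eq_sub_of_hasDerivAt hd (hcont.intervalIntegrable _ _)]
  rw [show T₀ = 0 + T₀ by ring, D1_per hu hper, sub_self]

end per

noncomputable def Wf (u : ℝ × Spc n → ℝ) (T₀ : ℝ) (i : Fin n) (x : Spc n) : ℝ :=
  ∫ t in (0:ℝ)..T₀, fderiv ℝ u (t, x) (1, 0)
    * fderiv ℝ u (t, x) ((0 : ℝ), EuclideanSpace.single i 1)

noncomputable def gf (u : ℝ × Spc n → ℝ) (T₀ : ℝ) (i : Fin n) (x : Spc n) : ℝ :=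
  ∫ t in (0:ℝ)..T₀, fderiv ℝ u (t, x) (1, 0)
    * fderiv ℝ (fderiv ℝ u) (t, x) ((0 : ℝ), EuclideanSpace.single i 1)
        ((0 : ℝ), EuclideanSpace.single i 1)

noncomputable def vf (u : ℝ × Spc n → ℝ) (T₀ : ℝ) (x : Spc n) : ℝ :=
  ∫ t in (0:ℝ)..T₀, (fderiv ℝ u (t, x) (1, 0)) ^ 2

section contW
variable (hu : ContDiff ℝ (⊤ : ℕ∞) u) (T₀ : ℝ)
include hu

lemma cont_sw : Continuous (fun q : Spc n × ℝ => ((q.2, q.1) : ℝ × Spc n)) :=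
  continuous_snd.prodMk continuous_fst

lemma cont_W (i : Fin n) : Continuous (Wf u T₀ i) := by
  apply intervalIntegral.continuous_parametric_intervalIntegral_of_continuous'
    (f := fun x t => fderiv ℝ u (t, x) (1, 0)
      * fderiv ℝ u (t, x) ((0 : ℝ), EuclideanSpace.single i 1))
  exact ((cont_D1v hu _).comp (cont_sw hu)).mul ((cont_D1v hu _).comp (cont_sw hu))

lemma cont_g (i : Fin n) : Continuous (gf u T₀ i) := by
  apply intervalIntegral.continuous_parametric_intervalIntegral_of_continuous'
    (f := fun x t => fderiv ℝ u (t, x) (1, 0)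
      * fderiv ℝ (fderiv ℝ u) (t, x) ((0 : ℝ), EuclideanSpace.single i 1)
          ((0 : ℝ), EuclideanSpace.single i 1))
  exact ((cont_D1v hu _).comp (cont_sw hu)).mul ((cont_D2vw hu _ _).comp (cont_sw hu))

lemma cont_v : Continuous (vf u T₀) := by
  apply intervalIntegral.continuous_parametric_intervalIntegral_of_continuous'
    (f := fun x t => (fderiv ℝ u (t, x) (1, 0)) ^ 2)
  exact ((cont_D1v hu _).comp (cont_sw hu)).pow 2

end contW
end NP
namespace NP
variable {n N : ℕ} {u : ℝ × Spc n → ℝ}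

lemma hasDerivAt_W (hu : ContDiff ℝ (⊤ : ℕ∞) u) {T₀ : ℝ}
    (hper : ∀ (t : ℝ) (x : Spc n), u (t + T₀, x) = u (t, x))
    (i : Fin n) (x : Spc n) (s₀ : ℝ) :
    HasDerivAt (fun s => Wf u T₀ i (x + s • EuclideanSpace.single i (1:ℝ)))
      (gf u T₀ i (x + s₀ • EuclideanSpace.single i (1:ℝ))) s₀ := by
  set e : Spc n := EuclideanSpace.single i (1:ℝ) with he
  set F : ℝ → ℝ → ℝ := fun s t =>
    fderiv ℝ u (t, x + s • e) (1, 0) * fderiv ℝ u (t, x + s • e) ((0:ℝ), e) with hF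
  set F' : ℝ → ℝ → ℝ := fun s t =>
    fderiv ℝ (fderiv ℝ u) (t, x + s • e) ((0:ℝ), e) (1, 0)
        * fderiv ℝ u (t, x + s • e) ((0:ℝ), e)
      + fderiv ℝ u (t, x + s • e) (1, 0)
        * fderiv ℝ (fderiv ℝ u) (t, x + s • e) ((0:ℝ), e) ((0:ℝ), e) with hF'
  have hcur : ∀ s : ℝ, Continuous fun t : ℝ => ((t, x + s • e) : ℝ × Spc n) := fun s =>
    continuous_id.prodMk continuous_const
  have hcurF : Continuous fun q : ℝ × ℝ => ((q.2, x + q.1 • e) : ℝ × Spc n) :=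
    continuous_snd.prodMk (continuous_const.add (continuous_fst.smul continuous_const))
  have hFcont : ∀ s, Continuous (F s) := fun s =>
    ((cont_D1v hu _).comp (hcur s)).mul ((cont_D1v hu _).comp (hcur s))
  have hF'jcont : Continuous fun q : ℝ × ℝ => F' q.1 q.2 := by
    exact (((cont_D2vw hu _ _).comp hcurF).mul ((cont_D1v hu _).comp hcurF)).add
      (((cont_D1v hu _).comp hcurF).mul ((cont_D2vw hu _ _).comp hcurF))
  have hK : IsCompact ((Set.Icc (s₀ - 1) (s₀ + 1)) ×ˢ (Set.uIcc (0:ℝ) T₀)) :=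
    isCompact_Icc.prod isCompact_uIcc
  obtain ⟨Cb, hCb⟩ := hK.exists_bound_of_continuousOn hF'jcont.continuousOn
  have H := intervalIntegral.hasDerivAt_integral_of_dominated_loc_of_deriv_le
    (μ := volume) (a := (0:ℝ)) (b := T₀) (F := F) (F' := F') (x₀ := s₀)
    (bound := fun _ => Cb) (s := Metric.ball s₀ 1) (Metric.ball_mem_nhds s₀ one_pos)
    (Filter.Eventually.of_forall fun s => (hFcont s).aestronglyMeasurable.restrict)
    ((hFcont s₀).intervalIntegrable _ _)
    ((hF'jcont.comp (continuous_const.prodMk continuous_id)).aestronglyMeasurable.restrict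
      (s := Set.uIoc 0 T₀))
    (Filter.Eventually.of_forall ?_) intervalIntegrable_const
    (Filter.Eventually.of_forall ?_)
  · have hgoal := H.2
    have hval : (∫ t in (0:ℝ)..T₀, F' s₀ t) = gf u T₀ i (x + s₀ • e) := by
      have hint1 : IntervalIntegrable (fun t =>
          fderiv ℝ (fderiv ℝ u) (t, x + s₀ • e) ((0:ℝ), e) (1, 0)
            * fderiv ℝ u (t, x + s₀ • e) ((0:ℝ), e)) volume 0 T₀ :=
        (((cont_D2vw hu _ _).comp (hcur s₀)).mul
          ((cont_D1v hu _).comp (hcur s₀))).intervalIntegrable _ _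
      have hint2 : IntervalIntegrable (fun t =>
          fderiv ℝ u (t, x + s₀ • e) (1, 0)
            * fderiv ℝ (fderiv ℝ u) (t, x + s₀ • e) ((0:ℝ), e) ((0:ℝ), e)) volume 0 T₀ :=
        (((cont_D1v hu _).comp (hcur s₀)).mul
          ((cont_D2vw hu _ _).comp (hcur s₀))).intervalIntegrable _ _
      have hsplit : (∫ t in (0:ℝ)..T₀, F' s₀ t)
          = (∫ t in (0:ℝ)..T₀,
              fderiv ℝ (fderiv ℝ u) (t, x + s₀ • e) ((0:ℝ), e) (1, 0)
                * fderiv ℝ u (t, x + s₀ • e) ((0:ℝ), e))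
            + ∫ t in (0:ℝ)..T₀,
              fderiv ℝ u (t, x + s₀ • e) (1, 0)
                * fderiv ℝ (fderiv ℝ u) (t, x + s₀ • e) ((0:ℝ), e) ((0:ℝ), e) :=
        intervalIntegral.integral_add hint1 hint2
      have hzero : (∫ t in (0:ℝ)..T₀,
          fderiv ℝ (fderiv ℝ u) (t, x + s₀ • e) ((0:ℝ), e) (1, 0)
            * fderiv ℝ u (t, x + s₀ • e) ((0:ℝ), e)) = 0 := by
        have hcongr : (fun t => fderiv ℝ (fderiv ℝ u) (t, x + s₀ • e) ((0:ℝ), e) (1, 0)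
              * fderiv ℝ u (t, x + s₀ • e) ((0:ℝ), e))
            = fun t => fderiv ℝ (fderiv ℝ u) (t, x + s₀ • e) (1, 0) ((0:ℝ), e)
              * fderiv ℝ u (t, x + s₀ • e) ((0:ℝ), e) := by
          funext t
          rw [D2_symm hu]
        rw [hcongr]
        exact integral_mix_zero hu hper (x + s₀ • e) ((0:ℝ), e)
      rw [hsplit, hzero, zero_add]
      rfl
    rw [hval] at hgoal
    exact hgoal
  · intro t _ s hs
    have hmem : ((s, t) : ℝ × ℝ) ∈ (Set.Icc (s₀ - 1) (s₀ + 1)) ×ˢ (Set.uIcc (0:ℝ) T₀) := by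
      constructor
      · have := Metric.mem_ball.mp hs
        rw [Real.dist_eq] at this
        constructor <;> [linarith [abs_le.mp this.le] ; linarith [(abs_le.mp this.le).2]]
      · exact Set.mem_of_mem_of_subset ‹t ∈ Set.uIoc 0 T₀› Set.uIoc_subset_uIcc
    exact hCb (s, t) hmem
  · intro t _ s _
    exact (hasDerivAt_D1line hu t x e s (1, 0)).mul (hasDerivAt_D1line hu t x e s ((0:ℝ), e))

/-- the elementary decay transfer along a line -/
lemma decay_line (x v : Spc n) (hv : ‖v‖ = 1) (s : ℝ) {r : ℝ} (hr : 0 ≤ r) :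
    (1 + ‖x + s • v‖) ^ (-r) ≤ (1 + ‖x‖) ^ r * (1 + |s|) ^ (-r) := by
  set A := 1 + ‖x‖ with hA
  set B := 1 + ‖x + s • v‖ with hB
  set S := 1 + |s| with hS
  have hA0 : 0 < A := by positivity
  have hB0 : 0 < B := by positivity
  have hS0 : 0 < S := by positivity
  have habs : |s| ≤ ‖x + s • v‖ + ‖x‖ := by
    have h1 : ‖s • v‖ = |s| := by rw [norm_smul, hv, Real.norm_eq_abs, mul_one]
    calc |s| = ‖(x + s • v) - x‖ := by rw [add_sub_cancel_left, h1]
    _ ≤ ‖x + s • v‖ + ‖x‖ := norm_sub_le _ _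
  have hSAB : S ≤ A * B := by
    have h2 : (0:ℝ) ≤ ‖x‖ := norm_nonneg _
    have h3 : (0:ℝ) ≤ ‖x + s • v‖ := norm_nonneg _
    nlinarith
  have hpow : S ^ r ≤ A ^ r * B ^ r := by
    rw [← Real.mul_rpow hA0.le hB0.le]
    exact Real.rpow_le_rpow hS0.le hSAB hr
  rw [Real.rpow_neg hB0.le, Real.rpow_neg hS0.le]
  rw [inv_eq_one_div, inv_eq_one_div, mul_comm (A ^ r), div_mul_eq_mul_div, one_mul]
  rw [div_le_div_iff₀ (by positivity) (by positivity)]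
  calc 1 * S ^ r = S ^ r := one_mul _
  _ ≤ A ^ r * B ^ r := hpow
  _ = A ^ r * B ^ r := rfl

lemma rpow_add_self {b : ℝ} (hb : 0 < b) (q : ℝ) :
    b ^ (-q) * b ^ (-q) = b ^ (-(2 * q)) := by
  rw [← Real.rpow_add hb]
  ring_nf

end NP
namespace NP

lemma vanish_of_interval_integral_zero {φ : ℝ → ℝ} (hφ : Continuous φ) {c d t : ℝ}
    (hct : c < t) (htd : t < d) (h0 : (∫ s in c..d, φ s ^ 2) = 0) : φ t = 0 := by
  have hle : c ≤ d := (hct.trans htd).le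
  rw [intervalIntegral.integral_of_le hle] at h0
  have hint : IntegrableOn (fun s => φ s ^ 2) (Set.Ioc c d) :=
    (hφ.pow 2).integrableOn_Ioc
  have hae := (MeasureTheory.integral_eq_zero_iff_of_nonneg_ae
    (ae_of_all _ fun s => sq_nonneg (φ s)) hint).mp h0
  have hae2 : ∀ᵐ s ∂(volume : Measure ℝ), s ∈ Set.Ioc c d → φ s ^ 2 = 0 :=
    (ae_restrict_iff' measurableSet_Ioc).mp hae
  rw [Filter.Eventually, mem_ae_iff] at hae2
  set S := Set.Ioo c d ∩ {s | φ s ^ 2 ≠ 0} with hSdef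
  have hS_open : IsOpen S :=
    isOpen_Ioo.inter (isOpen_compl_singleton.preimage (hφ.pow 2))
  have hsub : S ⊆ {s | s ∈ Set.Ioc c d → φ s ^ 2 = 0}ᶜ := by
    intro s hs
    simp only [Set.mem_compl_iff, Set.mem_setOf_eq, not_forall]
    exact ⟨⟨hs.1.1, hs.1.2.le⟩, hs.2⟩
  have hS_null : volume S = 0 := measure_mono_null hsub hae2
  have hS_empty : S = ∅ := hS_open.eq_empty_of_measure_zero hS_null
  by_contra h
  have : t ∈ S := ⟨⟨hct, htd⟩, pow_ne_zero 2 h⟩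
  rw [hS_empty] at this
  exact this

lemma integral_eq_zero_of_lines {m : ℕ} (i : Fin (m + 1)) (g : Spc (m + 1) → ℝ)
    (hg : Integrable g)
    (hline : ∀ y : Spc (m + 1), (∫ s : ℝ, g (y + s • EuclideanSpace.single i (1:ℝ))) = 0) :
    ∫ x, g x = 0 := by
  classical
  set ψ := (MeasurableEquiv.toLp 2 (Fin (m + 1) → ℝ)).symm with hψdef
  set χ := MeasurableEquiv.piFinSuccAbove (fun _ : Fin (m + 1) => ℝ) i with hχdef
  have hψ : MeasurePreserving ψ.symm volume volume :=
    (EuclideanSpace.volume_preserving_symm_measurableEquiv_toLp (Fin (m + 1))).symm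
  have hχ : MeasurePreserving χ.symm volume volume :=
    (MeasureTheory.volume_preserving_piFinSuccAbove (fun _ : Fin (m + 1) => ℝ) i).symm
  have h1 : (∫ x, g x) = ∫ z : Fin (m + 1) → ℝ, g (ψ.symm z) :=
    (hψ.integral_comp ψ.symm.measurableEmbedding g).symm
  have h2 : (∫ z : Fin (m + 1) → ℝ, g (ψ.symm z))
      = ∫ w : ℝ × (Fin m → ℝ), g (ψ.symm (χ.symm w)) :=
    (hχ.integral_comp χ.symm.measurableEmbedding _).symm
  have hgi : Integrable (fun w : ℝ × (Fin m → ℝ) => g (ψ.symm (χ.symm w))) := by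
    have e1 : Integrable (fun z : Fin (m + 1) → ℝ => g (ψ.symm z)) :=
      (hψ.integrable_comp_emb ψ.symm.measurableEmbedding).mpr hg
    exact (hχ.integrable_comp_emb χ.symm.measurableEmbedding).mpr e1
  have key : ∀ (s : ℝ) (z : Fin m → ℝ),
      ψ.symm (χ.symm (s, z)) = ψ.symm (χ.symm (0, z)) + s • EuclideanSpace.single i (1:ℝ) := by
    intro s z
    ext j
    show (χ.symm (s, z) : Fin (m+1) → ℝ) j
      = (χ.symm (0, z) : Fin (m+1) → ℝ) j + s * (EuclideanSpace.single i (1:ℝ)) j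
    have hχs : ∀ (sv : ℝ), (χ.symm (sv, z) : Fin (m+1) → ℝ) = Fin.insertNth i sv z := by
      intro sv
      rfl
    rw [hχs, hχs, EuclideanSpace.single_apply]
    rcases eq_or_ne j i with h | h
    · subst h; simp
    · rcases Fin.exists_succAbove_eq h with ⟨k, rfl⟩
      simp [Fin.insertNth_apply_succAbove, (Fin.succAbove_ne i k)]
  rw [MeasureTheory.Measure.volume_eq_prod] at hgi
  rw [h1, h2, MeasureTheory.Measure.volume_eq_prod, MeasureTheory.integral_prod_symm _ hgi]
  have hz : ∀ z : Fin m → ℝ, (∫ s : ℝ, g (ψ.symm (χ.symm (s, z)))) = 0 := by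
    intro z
    have h := hline (ψ.symm (χ.symm (0, z)))
    rw [← h]
    congr 1
    funext s
    rw [key s z]
  simp only [hz, integral_zero]

end NP
/-- A smooth, time-periodic solution of the PDE with admissible decay is
constant in time: there are no nonconstant time-periodic solutions. -/
theorem no_nonconstant_periodic_solutions
    {n N : ℕ} (hn : 1 ≤ n) (hN : 2 ≤ N)
    (a : Fin N → Spc n → ℝ) (ha : GoodCoeffs a)
    (u : ℝ × Spc n → ℝ) (hu : ContDiff ℝ (⊤ : ℕ∞) u) (hdec : AdmissibleDecay u)
    (hsol : IsSol a u)
    (T₀ : ℝ) (hT₀ : 0 < T₀)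
    (hper : ∀ (t : ℝ) (x : Spc n), u (t + T₀, x) = u (t, x)) :
    ∀ (t : ℝ) (x : Spc n), timeDeriv u t x = 0 := by
  obtain ⟨m, rfl⟩ : ∃ m, n = m + 1 := ⟨n - 1, by omega⟩
  classical
  -- notation
  set q : ℝ := ((m + 1 : ℕ) : ℝ) + 1 with hqdef
  have hq0 : 0 < q := by positivity
  -- decay constants on the period
  obtain ⟨C, hC⟩ := hdec T₀ hT₀
  have hCnn : 0 ≤ C := by
    have h0 : |(0:ℝ)| ≤ T₀ := by simp [hT₀.le]
    have h1 := (hC 0 0 h0).1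
    have hz : (0:ℝ) < (1 + ‖(0 : Spc (m+1))‖) ^ (-q) := by positivity
    nlinarith [abs_nonneg (u ((0:ℝ), (0 : Spc (m+1))))]
  have habs : ∀ s : ℝ, s ∈ Set.uIoc (0:ℝ) T₀ → |s| ≤ T₀ := by
    intro s hs
    rw [Set.uIoc_of_le hT₀.le] at hs
    rw [abs_le]
    exact ⟨by linarith [hs.1], hs.2⟩
  -- basic pointwise bounds
  have b_ut : ∀ (s : ℝ) (x : Spc (m+1)), |s| ≤ T₀ →
      |fderiv ℝ u (s, x) (1, 0)| ≤ C * (1 + ‖x‖) ^ (-q) := by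
    intro s x hs
    have h := (hC s x hs).2.1
    rwa [NP.timeDeriv_eq hu s x] at h
  have b_pd : ∀ (s : ℝ) (x : Spc (m+1)) (i : Fin (m+1)), |s| ≤ T₀ →
      |fderiv ℝ u (s, x) ((0:ℝ), EuclideanSpace.single i 1)| ≤ C * (1 + ‖x‖) ^ (-q) := by
    intro s x i hs
    have h := (hC s x hs).2.2.1
    rw [← NP.pd_eq hu s x]
    calc |fderiv ℝ (fun y => u (s, y)) x (EuclideanSpace.single i 1)|
        ≤ ‖fderiv ℝ (fun y => u (s, y)) x‖ * ‖EuclideanSpace.single i (1:ℝ)‖ :=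
          (fderiv ℝ (fun y => u (s, y)) x).le_opNorm _
      _ = ‖fderiv ℝ (fun y => u (s, y)) x‖ := by
          rw [EuclideanSpace.norm_single]; simp
      _ ≤ C * (1 + ‖x‖) ^ (-q) := h
  have b_pdd : ∀ (s : ℝ) (x : Spc (m+1)) (i : Fin (m+1)), |s| ≤ T₀ →
      |fderiv ℝ (fderiv ℝ u) (s, x) ((0:ℝ), EuclideanSpace.single i 1)
        ((0:ℝ), EuclideanSpace.single i 1)| ≤ C * (1 + ‖x‖) ^ (-q) := by
    intro s x i hs
    have h := (hC s x hs).2.2.2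
    rw [NP.D2_slice hu s x (EuclideanSpace.single i 1)]
    calc |iteratedFDeriv ℝ 2 (fun y => u (s, y)) x
          ![EuclideanSpace.single i 1, EuclideanSpace.single i 1]|
        ≤ ‖iteratedFDeriv ℝ 2 (fun y => u (s, y)) x‖
          * ∏ j : Fin 2, ‖(![EuclideanSpace.single i (1:ℝ), EuclideanSpace.single i 1] : _) j‖ :=
          (iteratedFDeriv ℝ 2 (fun y => u (s, y)) x).le_opNorm _
      _ = ‖iteratedFDeriv ℝ 2 (fun y => u (s, y)) x‖ := by
          rw [Fin.prod_univ_two]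
          simp
      _ ≤ C * (1 + ‖x‖) ^ (-q) := h
  -- decay of the auxiliary integrals
  set K : ℝ := C ^ 2 * T₀ with hKdef
  have hKnn : 0 ≤ K := by positivity
  have prod_bound : ∀ (s : ℝ) (x : Spc (m+1)) (A B : ℝ), |A| ≤ C * (1 + ‖x‖) ^ (-q) →
      |B| ≤ C * (1 + ‖x‖) ^ (-q) → ‖A * B‖ ≤ C ^ 2 * (1 + ‖x‖) ^ (-(2 * q)) := by
    intro s x A B hA hB
    rw [Real.norm_eq_abs, abs_mul]
    have hb : (0:ℝ) < 1 + ‖x‖ := by positivity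
    calc |A| * |B| ≤ (C * (1 + ‖x‖) ^ (-q)) * (C * (1 + ‖x‖) ^ (-q)) :=
          mul_le_mul hA hB (abs_nonneg _) (le_trans (abs_nonneg _) hA)
      _ = C ^ 2 * ((1 + ‖x‖) ^ (-q) * (1 + ‖x‖) ^ (-q)) := by ring
      _ = C ^ 2 * (1 + ‖x‖) ^ (-(2 * q)) := by rw [NP.rpow_add_self hb]
  have b_int : ∀ (f : ℝ → ℝ) (x : Spc (m+1)),
      (∀ s ∈ Set.uIoc (0:ℝ) T₀, ‖f s‖ ≤ C ^ 2 * (1 + ‖x‖) ^ (-(2 * q))) →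
      |∫ s in (0:ℝ)..T₀, f s| ≤ K * (1 + ‖x‖) ^ (-(2 * q)) := by
    intro f x hf
    have h := intervalIntegral.norm_integral_le_of_norm_le_const hf
    rw [Real.norm_eq_abs] at h
    calc |∫ s in (0:ℝ)..T₀, f s| ≤ C ^ 2 * (1 + ‖x‖) ^ (-(2 * q)) * |T₀ - 0| := h
      _ = K * (1 + ‖x‖) ^ (-(2 * q)) := by
          rw [sub_zero, abs_of_pos hT₀]
          ring
  have b_W : ∀ (i : Fin (m+1)) (x : Spc (m+1)),
      |NP.Wf u T₀ i x| ≤ K * (1 + ‖x‖) ^ (-(2 * q)) := by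
    intro i x
    refine b_int _ x fun s hs => ?_
    exact prod_bound s x _ _ (b_ut s x (habs s hs)) (b_pd s x i (habs s hs))
  have b_g : ∀ (i : Fin (m+1)) (x : Spc (m+1)),
      |NP.gf u T₀ i x| ≤ K * (1 + ‖x‖) ^ (-(2 * q)) := by
    intro i x
    refine b_int _ x fun s hs => ?_
    exact prod_bound s x _ _ (b_ut s x (habs s hs)) (b_pdd s x i (habs s hs))
  have b_v : ∀ x : Spc (m+1), |NP.vf u T₀ x| ≤ K * (1 + ‖x‖) ^ (-(2 * q)) := by
    intro x
    refine b_int _ x fun s hs => ?_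
    rw [pow_two]
    exact prod_bound s x _ _ (b_ut s x (habs s hs)) (b_ut s x (habs s hs))
  -- integrability of the majorant
  have hq2 : ((Module.finrank ℝ (Spc (m+1))) : ℝ) < 2 * q := by
    rw [finrank_euclideanSpace_fin, hqdef]
    push_cast
    linarith
  have hmaj : Integrable (fun y : Spc (m+1) => K * (1 + ‖y‖) ^ (-(2 * q))) :=
    (integrable_one_add_norm hq2).const_mul K
  have int_g : ∀ i : Fin (m+1), Integrable (NP.gf u T₀ i) := fun i =>
    hmaj.mono' (NP.cont_g hu T₀ i).aestronglyMeasurable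
      (ae_of_all _ fun x => by rw [Real.norm_eq_abs]; exact b_g i x)
  have int_v : Integrable (NP.vf u T₀) :=
    hmaj.mono' (NP.cont_v hu T₀).aestronglyMeasurable
      (ae_of_all _ fun x => by rw [Real.norm_eq_abs]; exact b_v x)
  -- line integrals of gf vanish
  have hline : ∀ (i : Fin (m+1)) (y : Spc (m+1)),
      (∫ s : ℝ, NP.gf u T₀ i (y + s • EuclideanSpace.single i (1:ℝ))) = 0 := by
    intro i y
    set e : Spc (m+1) := EuclideanSpace.single i (1:ℝ) with hedef
    have hnorme : ‖e‖ = 1 := by rw [hedef, EuclideanSpace.norm_single]; simp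
    have hder : ∀ s : ℝ, HasDerivAt (fun s => NP.Wf u T₀ i (y + s • e))
        (NP.gf u T₀ i (y + s • e)) s := fun s => NP.hasDerivAt_W hu hper i y s
    set K' : ℝ := K * (1 + ‖y‖) ^ (2 * q) with hK'def
    have hK'nn : 0 ≤ K' := by positivity
    have hbd : ∀ (Z : Spc (m+1) → ℝ), (∀ x, |Z x| ≤ K * (1 + ‖x‖) ^ (-(2 * q))) →
        ∀ s : ℝ, ‖Z (y + s • e)‖ ≤ K' * (1 + |s|) ^ (-(2 * q)) := by
      intro Z hZ s
      rw [Real.norm_eq_abs]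
      calc |Z (y + s • e)| ≤ K * (1 + ‖y + s • e‖) ^ (-(2 * q)) := hZ _
        _ ≤ K * ((1 + ‖y‖) ^ (2 * q) * (1 + |s|) ^ (-(2 * q))) :=
            mul_le_mul_of_nonneg_left
              (NP.decay_line y e hnorme s (by positivity)) hKnn
        _ = K' * (1 + |s|) ^ (-(2 * q)) := by rw [hK'def]; ring
    have htendaux : Tendsto (fun s : ℝ => K' * (1 + |s|) ^ (-(2 * q))) atTop (𝓝 0) := by
      have h1 : Tendsto (fun s : ℝ => 1 + |s|) atTop atTop :=
        tendsto_atTop_add_const_left _ 1 tendsto_abs_atTop_atTop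
      have h2 := (tendsto_rpow_neg_atTop (by positivity : (0:ℝ) < 2 * q)).comp h1
      have h3 := h2.const_mul K'
      simpa using h3
    have htendauxbot : Tendsto (fun s : ℝ => K' * (1 + |s|) ^ (-(2 * q))) atBot (𝓝 0) := by
      have h1 : Tendsto (fun s : ℝ => 1 + |s|) atBot atTop :=
        tendsto_atTop_add_const_left _ 1 tendsto_abs_atBot_atTop
      have h2 := (tendsto_rpow_neg_atTop (by positivity : (0:ℝ) < 2 * q)).comp h1
      have h3 := h2.const_mul K'
      simpa using h3
    have htop : Tendsto (fun s : ℝ => NP.Wf u T₀ i (y + s • e)) atTop (𝓝 0) :=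
      squeeze_zero_norm (fun s => hbd _ (b_W i) s) htendaux
    have hbot : Tendsto (fun s : ℝ => NP.Wf u T₀ i (y + s • e)) atBot (𝓝 0) :=
      squeeze_zero_norm (fun s => hbd _ (b_W i) s) htendauxbot
    have hmaj1 : Integrable (fun s : ℝ => K' * (1 + |s|) ^ (-(2 * q))) := by
      have h1 : Integrable (fun s : ℝ => (1 + ‖s‖) ^ (-(2 * q))) :=
        integrable_one_add_norm (by rw [Module.finrank_self]; norm_num; linarith)
      have h2 := h1.const_mul K'
      simpa [Real.norm_eq_abs] using h2
    have hcontline : Continuous (fun s : ℝ => NP.gf u T₀ i (y + s • e)) :=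
      (NP.cont_g hu T₀ i).comp
        (continuous_const.add (continuous_id.smul continuous_const))
    have hint : Integrable (fun s : ℝ => NP.gf u T₀ i (y + s • e)) :=
      hmaj1.mono' hcontline.aestronglyMeasurable (ae_of_all _ fun s => hbd _ (b_g i) s)
    have := MeasureTheory.integral_of_hasDerivAt_of_tendsto hder hint hbot htop
    simpa using this
  -- spatial integrals of gf vanish
  have hint_g_zero : ∀ i : Fin (m+1), (∫ x : Spc (m+1), NP.gf u T₀ i x) = 0 := fun i =>
    NP.integral_eq_zero_of_lines i _ (int_g i) (hline i)
  -- v equals the sum of the gf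
  have hsol' : ∀ (s : ℝ) (x : Spc (m+1)), fderiv ℝ u (s, x) (1, 0)
      = (∑ i : Fin (m+1), fderiv ℝ (fderiv ℝ u) (s, x) ((0:ℝ), EuclideanSpace.single i 1)
          ((0:ℝ), EuclideanSpace.single i 1)) + NP.Qf a x (u (s, x)) := by
    intro s x
    have h := hsol s x
    rw [NP.timeDeriv_eq hu, NP.lap_eq hu] at h
    exact h
  have hvsum : ∀ x : Spc (m+1), NP.vf u T₀ x = ∑ i : Fin (m+1), NP.gf u T₀ i x := by
    intro x
    have hcur : Continuous fun s : ℝ => ((s, x) : ℝ × Spc (m+1)) :=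
      continuous_id.prodMk continuous_const
    have hint1 : IntervalIntegrable (fun s => ∑ i : Fin (m+1),
        fderiv ℝ u (s, x) (1, 0) * fderiv ℝ (fderiv ℝ u) (s, x)
          ((0:ℝ), EuclideanSpace.single i 1) ((0:ℝ), EuclideanSpace.single i 1))
        volume 0 T₀ := by
      refine Continuous.intervalIntegrable ?_ _ _
      exact continuous_finset_sum _ fun i _ =>
        ((NP.cont_D1v hu _).comp hcur).mul ((NP.cont_D2vw hu _ _).comp hcur)
    have hint2 : IntervalIntegrable (fun s =>
        NP.Qf a x (u (s, x)) * fderiv ℝ u (s, x) (1, 0)) volume 0 T₀ := by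
      refine Continuous.intervalIntegrable ?_ _ _
      exact (NP.cont_Qf_comp a x ((NP.diffu hu).continuous.comp hcur)).mul
        ((NP.cont_D1v hu _).comp hcur)
    have hcongr : Set.EqOn (fun s => (fderiv ℝ u (s, x) (1, 0)) ^ 2)
        (fun s => (∑ i : Fin (m+1),
          fderiv ℝ u (s, x) (1, 0) * fderiv ℝ (fderiv ℝ u) (s, x)
            ((0:ℝ), EuclideanSpace.single i 1) ((0:ℝ), EuclideanSpace.single i 1))
          + NP.Qf a x (u (s, x)) * fderiv ℝ u (s, x) (1, 0)) (Set.uIcc 0 T₀) := by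
      intro s _
      show (fderiv ℝ u (s, x) (1, 0)) ^ 2 = _
      rw [pow_two]
      nth_rewrite 2 [hsol' s x]
      rw [mul_add, Finset.mul_sum,
        mul_comm (fderiv ℝ u (s, x) (1, 0)) (NP.Qf a x (u (s, x)))]
    have hibl : ∀ i ∈ Finset.univ, IntervalIntegrable (fun s =>
        fderiv ℝ u (s, x) (1, 0) * fderiv ℝ (fderiv ℝ u) (s, x)
          ((0:ℝ), EuclideanSpace.single i 1) ((0:ℝ), EuclideanSpace.single i 1))
        volume 0 T₀ := by
      intro i _
      refine Continuous.intervalIntegrable ?_ _ _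
      exact ((NP.cont_D1v hu _).comp hcur).mul ((NP.cont_D2vw hu _ _).comp hcur)
    show (∫ s in (0:ℝ)..T₀, (fderiv ℝ u (s, x) (1, 0)) ^ 2) = _
    rw [intervalIntegral.integral_congr hcongr,
      intervalIntegral.integral_add hint1 hint2,
      NP.integral_Qut_zero hu hper a x, add_zero,
      intervalIntegral.integral_finset_sum hibl]
    rfl
  -- the spatial integral of v is zero
  have hv_int_zero : (∫ x : Spc (m+1), NP.vf u T₀ x) = 0 := by
    rw [show NP.vf u T₀ = fun x => ∑ i : Fin (m+1), NP.gf u T₀ i x from funext hvsum]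
    rw [MeasureTheory.integral_finset_sum _ (fun i _ => int_g i)]
    simp [hint_g_zero]
  -- v is nonnegative, hence vanishes identically
  have hv_nonneg : ∀ x : Spc (m+1), 0 ≤ NP.vf u T₀ x := fun x =>
    intervalIntegral.integral_nonneg hT₀.le fun s _ => sq_nonneg _
  have hv_ae : NP.vf u T₀ =ᵐ[volume] (fun _ => (0:ℝ)) :=
    (MeasureTheory.integral_eq_zero_iff_of_nonneg hv_nonneg int_v).mp hv_int_zero
  have hv0 : ∀ x : Spc (m+1), NP.vf u T₀ x = 0 := by
    have h := ((NP.cont_v hu T₀).ae_eq_iff_eq volume continuous_const).mp hv_ae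
    intro x
    exact congrFun h x
  -- conclude pointwise vanishing of the time derivative
  intro t x
  set φ : ℝ → ℝ := fun s => timeDeriv u s x with hφdef
  have hφeq : φ = fun s => fderiv ℝ u (s, x) (1, 0) :=
    funext fun s => NP.timeDeriv_eq hu s x
  have hφcont : Continuous φ := by
    rw [hφeq]
    exact (NP.cont_D1v hu _).comp (continuous_id.prodMk continuous_const)
  have hφper : Function.Periodic (fun s => φ s ^ 2) T₀ := by
    intro s
    simp only [hφdef]
    rw [NP.ut_per hu hper s x]
  have hI : (∫ s in (t - T₀/2)..(t - T₀/2 + T₀), φ s ^ 2) = 0 := by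
    rw [hφper.intervalIntegral_add_eq (t - T₀/2) 0, zero_add]
    have h : (∫ s in (0:ℝ)..T₀, φ s ^ 2) = NP.vf u T₀ x := by
      apply intervalIntegral.integral_congr
      intro s _
      rw [hφeq]
    rw [h]
    exact hv0 x
  exact NP.vanish_of_interval_integral_zero hφcont (by linarith) (by linarith) hI

end
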